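/- There exist constants A₁ > 0 and A₂ > 0 such that for all positive integers x ≥ 2, P·x − A₁·√x/log x ≤ F(x) ≤ P·x + A₂·√x. -/

import Mathlib

open Finset Real

set_option maxHeartbeats 2000000

/-- `F x` is the cardinality of the set `{n : 1 ≤ n ≤ x, ⌊x/n⌋ prime}`. -/
def F (x : ℕ) : ℕ := ((Finset.Icc 1 x).filter (fun n => Nat.Prime (x / n))).card

/-- `P = Σ_{p prime} 1/(p(p+1))`. -/
noncomputable def P : ℝ := ∑' p : Nat.Primes, 1 / ((p : ℝ) * ((p : ℝ) + 1))

def Cnt (n : ℕ) : ℕ := ((Finset.range (n+1)).filter Nat.Prime).card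


lemma tele (f : ℕ → ℝ) (a : ℕ) : ∀ N, a ≤ N + 1 → ∑ n ∈ Icc a N, (f n - f (n+1)) = f a - f (N+1) := by
  intro N
  induction N with
  | zero => intro h; interval_cases a <;> simp
  | succ N ih =>
    intro h
    rcases Nat.lt_or_ge (N+1) a with h1 | h1
    · have : a = N + 2 := by omega
      subst this
      simp
    · rw [Finset.sum_Icc_succ_top (by omega), ih (by omega)]
      ring

lemma sumbase : Summable (fun n : ℕ => 1/((n:ℝ)*(n+1))) := by
  refine Summable.of_nonneg_of_le (fun n => by positivity) (fun n => ?_)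
    (summable_one_div_nat_pow.2 one_lt_two)
  rcases Nat.eq_zero_or_pos n with h | h
  · simp [h]
  · have hn : (1:ℝ) ≤ n := Nat.one_le_cast.2 h
    apply one_div_le_one_div_of_le (by positivity)
    nlinarith

lemma sumP : Summable (fun p : Nat.Primes => 1 / ((p : ℝ) * ((p : ℝ) + 1))) :=
  sumbase.subtype _

lemma theta_le (n : ℕ) : ∑ p ∈ (Finset.range (n+1)).filter Nat.Prime, Real.log p ≤ n * Real.log 4 := by
  have h1 : Real.log (primorial n) ≤ Real.log (4^n) := by
    apply Real.log_le_log (by exact_mod_cast primorial_pos n)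
    exact_mod_cast primorial_le_4_pow n
  rw [Real.log_pow] at h1
  rw [← Real.log_prod]
  · calc Real.log (∏ p ∈ (Finset.range (n+1)).filter Nat.Prime, (p:ℝ))
        = Real.log (primorial n) := by rw [primorial]; push_cast; rfl
      _ ≤ n * Real.log 4 := h1
  · intro p hp
    simp only [mem_filter] at hp
    exact_mod_cast hp.2.pos.ne'

lemma cheby {n : ℕ} (hn : 2 ≤ n) : (Cnt n : ℝ) ≤ 8 * n / Real.log n := by
  set s := n.sqrt with hs
  have hL : (0:ℝ) < Real.log n := Real.log_pos (by exact_mod_cast hn)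
  have hsqn : (1:ℝ) ≤ Real.sqrt n := by
    rw [show (1:ℝ) = Real.sqrt 1 by simp]
    exact Real.sqrt_le_sqrt (by exact_mod_cast hn.trans' (by norm_num))
  have hs1 : ((s:ℝ) + 1) ≤ 2 * Real.sqrt n := by
    have : (s:ℝ) ≤ Real.sqrt n := by
      rw [Real.le_sqrt (by positivity)]
      · exact_mod_cast Nat.sqrt_le' n
      · positivity
    linarith
  have hlogsqrt : Real.log n ≤ 2 * Real.sqrt n := by
    have h0 : Real.log n = 2 * Real.log (Real.sqrt n) := by
      rw [Real.log_sqrt (by positivity)]; ring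
    have := Real.log_le_sub_one_of_pos (show (0:ℝ) < Real.sqrt n by positivity)
    linarith
  have hlogn2 : Real.log n ≤ 2 * Real.log (s+1) := by
    have h1 : (n:ℝ) ≤ ((s:ℕ)+1)^2 := by exact_mod_cast (Nat.lt_succ_sqrt' n).le
    calc Real.log n ≤ Real.log (((s:ℝ)+1)^2) := by
          apply Real.log_le_log (by positivity); exact_mod_cast h1
      _ = 2 * Real.log (s+1) := by
          rw [show ((s:ℝ)+1)^2 = ((s:ℝ)+1)*((s:ℝ)+1) by ring,
            Real.log_mul (by positivity) (by positivity)]; ring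
  -- split
  set A := (Finset.range (n+1)).filter Nat.Prime with hA
  have hsplit : Cnt n = (A.filter (· ≤ s)).card + (A.filter (fun p => ¬ p ≤ s)).card := by
    rw [Cnt, ← hA, Finset.card_filter_add_card_filter_not]
  have hc1 : ((A.filter (· ≤ s)).card : ℝ) ≤ (s:ℝ) + 1 := by
    have : (A.filter (· ≤ s)) ⊆ Finset.range (s+1) := by
      intro p hp
      simp only [Finset.mem_filter, hA, Finset.mem_range] at hp ⊢
      omega
    have := Finset.card_le_card this
    rw [Finset.card_range] at this
    exact_mod_cast this
  have hc2 : ((A.filter (fun p => ¬ p ≤ s)).card : ℝ) * Real.log (s+1) ≤ n * Real.log 4 := by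
    calc ((A.filter (fun p => ¬ p ≤ s)).card : ℝ) * Real.log (s+1)
        ≤ ∑ p ∈ A.filter (fun p => ¬ p ≤ s), Real.log p := by
          rw [← nsmul_eq_mul, ← Finset.sum_const]
          · apply Finset.sum_le_sum
            intro p hp
            simp only [Finset.mem_filter, hA, Finset.mem_range] at hp
            apply Real.log_le_log (by positivity)
            have : s + 1 ≤ p := by omega
            exact_mod_cast this
      _ ≤ ∑ p ∈ A, Real.log p := by
          apply Finset.sum_le_sum_of_subset_of_nonneg (Finset.filter_subset _ _)
          intro p hp _
          simp only [Finset.mem_filter, hA] at hp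
          exact Real.log_nonneg (by exact_mod_cast hp.2.one_lt.le)
      _ ≤ n * Real.log 4 := theta_le n
  -- combine
  rw [le_div_iff₀ hL]
  have e1 : ((s:ℝ)+1) * Real.log n ≤ 4 * n := by
    calc ((s:ℝ)+1) * Real.log n ≤ (2*Real.sqrt n) * (2*Real.sqrt n) := by
          apply mul_le_mul hs1 hlogsqrt hL.le (by positivity)
      _ = 4 * n := by rw [show (2*Real.sqrt n)*(2*Real.sqrt n) = 4*(Real.sqrt n*Real.sqrt n) by ring,
          Real.mul_self_sqrt (by positivity)]
  have e2 : ((A.filter (fun p => ¬ p ≤ s)).card : ℝ) * Real.log n ≤ 4 * n := by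
    have hcard : (0:ℝ) ≤ ((A.filter (fun p => ¬ p ≤ s)).card : ℝ) := by positivity
    calc ((A.filter (fun p => ¬ p ≤ s)).card : ℝ) * Real.log n
        ≤ ((A.filter (fun p => ¬ p ≤ s)).card : ℝ) * (2 * Real.log (s+1)) := by
          apply mul_le_mul_of_nonneg_left hlogn2 hcard
      _ = 2 * (((A.filter (fun p => ¬ p ≤ s)).card : ℝ) * Real.log (s+1)) := by ring
      _ ≤ 2 * (n * Real.log 4) := by linarith
      _ ≤ 4 * n := by
          have h4 : Real.log 4 = 2 * Real.log 2 := by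
            rw [show (4:ℝ) = 2*2 by norm_num, Real.log_mul (by norm_num) (by norm_num)]; ring
          have h2 : Real.log 2 ≤ 1 := by
            have := Real.log_le_sub_one_of_pos (show (0:ℝ) < 2 by norm_num)
            linarith
          have hn0 : (0:ℝ) ≤ n := by positivity
          nlinarith
  calc (Cnt n : ℝ) * Real.log n
      = (((A.filter (· ≤ s)).card : ℝ) + ((A.filter (fun p => ¬ p ≤ s)).card : ℝ)) * Real.log n := by
        rw [hsplit]; push_cast; ring
    _ ≤ (((s:ℝ)+1) + ((A.filter (fun p => ¬ p ≤ s)).card : ℝ)) * Real.log n := by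
        apply mul_le_mul_of_nonneg_right (by linarith) hL.le
    _ = ((s:ℝ)+1) * Real.log n + ((A.filter (fun p => ¬ p ≤ s)).card : ℝ) * Real.log n := by ring
    _ ≤ 8 * n := by linarith

lemma finTail {y : ℕ} (hy : 2 ≤ y) (A : Finset ℕ) (hA : ∀ p ∈ A, p.Prime ∧ y < p) :
    ∑ p ∈ A, 1/((p:ℝ)*((p:ℝ)+1)) ≤ 32/((y:ℝ) * Real.log y) := by
  have hyR : (2:ℝ) ≤ (y:ℝ) := by exact_mod_cast hy
  have hlogy : (0:ℝ) < Real.log y := Real.log_pos (by linarith)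
  rcases A.eq_empty_or_nonempty with rfl | hne
  · simp; positivity
  obtain ⟨N, hNmax⟩ : ∃ N, ∀ p ∈ A, p ≤ N := ⟨A.max' hne, fun p hp => A.le_max' p hp⟩
  have hNy : y < N := by
    obtain ⟨p, hp⟩ := hne
    exact lt_of_lt_of_le (hA p hp).2 (hNmax p hp)
  have hNR : (y:ℝ) < (N:ℝ) := by exact_mod_cast hNy
  set f : ℕ → ℝ := fun n => 1/(n:ℝ)^2 with hf
  set g : ℕ → ℝ := fun n => f n - f (n+1) with hg
  -- step 1: per-prime expansion
  have step1 : ∀ p ∈ A, 1/((p:ℝ)*((p:ℝ)+1)) ≤ (∑ n ∈ Icc (y+1) N, if p ≤ n then g n else 0) + f (N+1) := by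
    intro p hp
    obtain ⟨hprime, hyp⟩ := hA p hp
    have hpR : (2:ℝ) ≤ (p:ℝ) := by exact_mod_cast hprime.two_le
    have hpN : p ≤ N := hNmax p hp
    have e1 : Finset.Icc p N = (Finset.Icc (y+1) N).filter (fun n => p ≤ n) := by
      ext n
      simp only [Finset.mem_Icc, Finset.mem_filter]
      omega
    have e2 : ∑ n ∈ Icc (y+1) N, (if p ≤ n then g n else 0) = ∑ n ∈ Icc p N, g n := by
      rw [← Finset.sum_filter, ← e1]
    rw [e2, hg]
    rw [tele f p N (by omega)]
    have : 1/((p:ℝ)*((p:ℝ)+1)) ≤ f p := by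
      rw [hf]
      apply one_div_le_one_div_of_le (by positivity)
      nlinarith
    linarith
  -- sum it
  have step2 : ∑ p ∈ A, 1/((p:ℝ)*((p:ℝ)+1))
      ≤ ∑ n ∈ Icc (y+1) N, ((A.filter (· ≤ n)).card : ℝ) * g n + (A.card : ℝ) * f (N+1) := by
    calc ∑ p ∈ A, 1/((p:ℝ)*((p:ℝ)+1))
        ≤ ∑ p ∈ A, ((∑ n ∈ Icc (y+1) N, if p ≤ n then g n else 0) + f (N+1)) :=
          Finset.sum_le_sum step1
      _ = ∑ p ∈ A, ∑ n ∈ Icc (y+1) N, (if p ≤ n then g n else 0) + (A.card : ℝ) * f (N+1) := by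
          rw [Finset.sum_add_distrib, Finset.sum_const, nsmul_eq_mul]
      _ = ∑ n ∈ Icc (y+1) N, ∑ p ∈ A, (if p ≤ n then g n else 0) + (A.card : ℝ) * f (N+1) := by
          rw [Finset.sum_comm]
      _ = ∑ n ∈ Icc (y+1) N, ((A.filter (· ≤ n)).card : ℝ) * g n + (A.card : ℝ) * f (N+1) := by
          congr 1
          apply Finset.sum_congr rfl
          intro n _
          rw [← Finset.sum_filter, Finset.sum_const, nsmul_eq_mul]
  set h : ℕ → ℝ := fun n => 1/((n:ℝ)-1) with hh
  have per_n : ∀ n ∈ Icc (y+1) N, ((A.filter (· ≤ n)).card : ℝ) * g n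
      ≤ (24/Real.log y) * (h n - h (n+1)) := by
    intro n hn
    rw [Finset.mem_Icc] at hn
    have hn3 : 3 ≤ n := by omega
    have hnR : (3:ℝ) ≤ (n:ℝ) := by exact_mod_cast hn3
    have hlogn : Real.log y ≤ Real.log n := by
      apply Real.log_le_log (by linarith)
      have : y ≤ n := by omega
      exact_mod_cast this
    have hlognpos : (0:ℝ) < Real.log n := lt_of_lt_of_le hlogy hlogn
    have hgnonneg : 0 ≤ g n := by
      rw [hg, hf]
      simp only
      have : (0:ℝ) < (n:ℝ) := by linarith
      have h2 : ((n:ℝ))^2 ≤ ((n:ℝ)+1)^2 := by nlinarith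
      have := one_div_le_one_div_of_le (by positivity : (0:ℝ) < (n:ℝ)^2) h2
      push_cast
      linarith
    have hcard : ((A.filter (· ≤ n)).card : ℝ) ≤ (Cnt n : ℝ) := by
      have hsub : A.filter (· ≤ n) ⊆ (Finset.range (n+1)).filter Nat.Prime := by
        intro p hp
        simp only [Finset.mem_filter, Finset.mem_range] at hp ⊢
        exact ⟨by omega, (hA p hp.1).1⟩
      exact_mod_cast Finset.card_le_card hsub
    have hcheb : (Cnt n : ℝ) ≤ 8 * n / Real.log n := cheby (by omega)
    have hgle : g n ≤ 3/(n:ℝ)^3 := by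
      rw [hg, hf]
      simp only
      push_cast
      rw [div_sub_div _ _ (by positivity) (by positivity), div_le_div_iff₀ (by positivity) (by positivity)]
      ring_nf
      nlinarith
    calc ((A.filter (· ≤ n)).card : ℝ) * g n
        ≤ (8 * n / Real.log n) * (3/(n:ℝ)^3) := by
          apply mul_le_mul (le_trans hcard hcheb) hgle hgnonneg (by positivity)
      _ = 24 / ((n:ℝ)^2 * Real.log n) := by
          field_simp
          ring
      _ ≤ 24 / (((n:ℝ) * ((n:ℝ)-1)) * Real.log y) := by
          apply div_le_div_of_nonneg_left (by norm_num)
            (mul_pos (mul_pos (by linarith) (by linarith)) hlogy)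
          nlinarith
      _ = (24/Real.log y) * (h n - h (n+1)) := by
          rw [hh]
          simp only
          push_cast
          rw [div_sub_div _ _ (by linarith : (n:ℝ)-1 ≠ 0) (by linarith : ((n:ℝ)+1)-1 ≠ 0)]
          have hn1 : (n:ℝ) - 1 ≠ 0 := by linarith
          have hn0 : (n:ℝ) ≠ 0 := by linarith
          rw [show (n:ℝ)+1-1 = n by ring]
          field_simp
          ring
  have hmain : ∑ n ∈ Icc (y+1) N, ((A.filter (· ≤ n)).card : ℝ) * g n ≤ 24 / ((y:ℝ) * Real.log y) := by
    calc ∑ n ∈ Icc (y+1) N, ((A.filter (· ≤ n)).card : ℝ) * g n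
        ≤ ∑ n ∈ Icc (y+1) N, (24/Real.log y) * (h n - h (n+1)) := Finset.sum_le_sum per_n
      _ = (24/Real.log y) * (h (y+1) - h (N+1)) := by
          rw [← Finset.mul_sum, tele h (y+1) N (by omega)]
      _ ≤ (24/Real.log y) * (1/(y:ℝ)) := by
          apply mul_le_mul_of_nonneg_left _ (by positivity)
          rw [hh]
          simp only
          push_cast
          have h1 : ((y:ℝ)+1)-1 = (y:ℝ) := by ring
          have h2 : (0:ℝ) < ((N:ℝ)+1)-1 := by linarith
          rw [h1]
          have : 0 ≤ 1/(((N:ℝ)+1)-1) := by positivity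
          linarith
      _ = 24 / ((y:ℝ) * Real.log y) := by
          field_simp
  have hbdry : (A.card : ℝ) * f (N+1) ≤ 8 / ((y:ℝ) * Real.log y) := by
    have hcard : (A.card : ℝ) ≤ (Cnt N : ℝ) := by
      have hsub : A ⊆ (Finset.range (N+1)).filter Nat.Prime := by
        intro p hp
        simp only [Finset.mem_filter, Finset.mem_range]
        exact ⟨by have := hNmax p hp; omega, (hA p hp).1⟩
      exact_mod_cast Finset.card_le_card hsub
    have hcheb : (Cnt N : ℝ) ≤ 8 * N / Real.log N := cheby (by omega)
    have hlogN : Real.log y ≤ Real.log N := by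
      apply Real.log_le_log (by linarith)
      exact_mod_cast hNR.le
    have hlogNpos : (0:ℝ) < Real.log N := lt_of_lt_of_le hlogy hlogN
    have hfpos : (0:ℝ) ≤ f (N+1) := by rw [hf]; positivity
    calc (A.card : ℝ) * f (N+1)
        ≤ (8 * N / Real.log N) * f (N+1) :=
          mul_le_mul_of_nonneg_right (le_trans hcard hcheb) hfpos
      _ = 8 * N / (Real.log N * ((N:ℝ)+1)^2) := by
          rw [hf]
          simp only
          push_cast
          rw [div_mul_div_comm, mul_one]
      _ ≤ 8 / ((y:ℝ) * Real.log y) := by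
          rw [div_le_div_iff₀ (by positivity) (by positivity)]
          have hyN : (y:ℝ) ≤ (N:ℝ) := hNR.le
          have hNnn : (0:ℝ) ≤ (N:ℝ) := by linarith
          have h1 : (y:ℝ)*Real.log y ≤ (N:ℝ)*Real.log N :=
            mul_le_mul hyN hlogN hlogy.le hNnn
          nlinarith [mul_le_mul_of_nonneg_left h1 hNnn,
            mul_nonneg (show (0:ℝ) ≤ 2*(N:ℝ)+1 by linarith) hlogNpos.le]
  calc ∑ p ∈ A, 1/((p:ℝ)*((p:ℝ)+1))
      ≤ ∑ n ∈ Icc (y+1) N, ((A.filter (· ≤ n)).card : ℝ) * g n + (A.card : ℝ) * f (N+1) := step2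
    _ ≤ 24 / ((y:ℝ) * Real.log y) + 8 / ((y:ℝ) * Real.log y) := add_le_add hmain hbdry
    _ = 32 / ((y:ℝ) * Real.log y) := by ring

lemma primes_coe_inj : Function.Injective (fun p : Nat.Primes => (p : ℕ)) :=
  fun a b h => Subtype.ext h

lemma sum_primes_eq (u : Finset Nat.Primes) :
    ∑ p ∈ u, 1/((p:ℝ)*((p:ℝ)+1))
      = ∑ n ∈ u.image (fun p : Nat.Primes => (p : ℕ)), 1/((n:ℝ)*((n:ℝ)+1)) := by
  rw [Finset.sum_image (fun a _ b _ h => primes_coe_inj h)]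

lemma Psum_le_P (y : ℕ) :
    ∑ p ∈ (Finset.range (y+1)).filter Nat.Prime, 1/((p:ℝ)*((p:ℝ)+1)) ≤ P := by
  classical
  set v : Finset Nat.Primes :=
    ((Finset.range (y+1)).filter Nat.Prime).attach.image
      (fun x => (⟨x.1, (Finset.mem_filter.mp x.2).2⟩ : Nat.Primes)) with hv
  have he : ∑ p ∈ v, 1/((p:ℝ)*((p:ℝ)+1))
      = ∑ p ∈ (Finset.range (y+1)).filter Nat.Prime, 1/((p:ℝ)*((p:ℝ)+1)) := by
    rw [hv]
    erw [Finset.sum_image (by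
      intro a _ b _ h
      exact Subtype.ext (congrArg (fun q : Nat.Primes => (q : ℕ)) h))]
    rw [show ∑ x ∈ ((Finset.range (y+1)).filter Nat.Prime).attach,
        1/(((⟨x.1, (Finset.mem_filter.mp x.2).2⟩ : Nat.Primes) : ℝ)
          * (((⟨x.1, (Finset.mem_filter.mp x.2).2⟩ : Nat.Primes) : ℝ)+1))
        = ∑ x ∈ ((Finset.range (y+1)).filter Nat.Prime).attach,
          (fun n : ℕ => 1/((n:ℝ)*((n:ℝ)+1))) x.1 from Finset.sum_congr rfl (fun x _ => rfl)]
    exact Finset.sum_attach ((Finset.range (y+1)).filter Nat.Prime) (fun n => 1/((n:ℝ)*((n:ℝ)+1)))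
  rw [← he]
  exact sumP.sum_le_tsum v (fun p _ => by positivity)

lemma tail_bound {y : ℕ} (hy : 2 ≤ y) :
    P ≤ (∑ p ∈ (Finset.range (y+1)).filter Nat.Prime, 1/((p:ℝ)*((p:ℝ)+1)))
      + 32/((y:ℝ) * Real.log y) := by
  classical
  apply sumP.tsum_le_of_sum_le
  intro u
  rw [sum_primes_eq u]
  set A := u.image (fun p : Nat.Primes => (p : ℕ)) with hA
  have hprime : ∀ n ∈ A, n.Prime := by
    intro n hn
    rw [hA, Finset.mem_image] at hn
    obtain ⟨p, _, rfl⟩ := hn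
    exact p.property
  rw [← Finset.sum_filter_add_sum_filter_not A (fun n => n ≤ y)]
  apply add_le_add
  · apply Finset.sum_le_sum_of_subset_of_nonneg
    · intro n hn
      rw [Finset.mem_filter] at hn
      rw [Finset.mem_filter, Finset.mem_range]
      exact ⟨by omega, hprime n hn.1⟩
    · intro n _ _; positivity
  · apply finTail hy
    intro n hn
    rw [Finset.mem_filter] at hn
    exact ⟨hprime n hn.1, by omega⟩

lemma F_eq (x : ℕ) :
    F x = ∑ p ∈ (Finset.range (x+1)).filter Nat.Prime, (x/p - x/(p+1)) := by
  classical
  have hmap : ∀ n ∈ (Finset.Icc 1 x).filter (fun n => Nat.Prime (x / n)),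
      x / n ∈ (Finset.range (x+1)).filter Nat.Prime := by
    intro n hn
    rw [Finset.mem_filter, Finset.mem_Icc] at hn
    rw [Finset.mem_filter, Finset.mem_range]
    have := Nat.div_le_self x n
    exact ⟨by omega, hn.2⟩
  rw [F, Finset.card_eq_sum_card_fiberwise hmap]
  apply Finset.sum_congr rfl
  intro p hp
  rw [Finset.mem_filter, Finset.mem_range] at hp
  obtain ⟨hpx, hprime⟩ := hp
  have hp0 : 0 < p := hprime.pos
  have hfib : (((Finset.Icc 1 x).filter (fun n => Nat.Prime (x / n))).filter
      (fun n => x / n = p)) = Finset.Ioc (x/(p+1)) (x/p) := by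
    ext n
    simp only [Finset.mem_filter, Finset.mem_Icc, Finset.mem_Ioc]
    constructor
    · rintro ⟨⟨⟨hn1, hnx⟩, -⟩, hdiv⟩
      have hn0 : 0 < n := hn1
      constructor
      · by_contra hle
        push_neg at hle
        have h1 : n * (p+1) ≤ x := (Nat.le_div_iff_mul_le (Nat.succ_pos p)).mp hle
        have h2 : p + 1 ≤ x / n := (Nat.le_div_iff_mul_le hn0).mpr (by nlinarith)
        omega
      · have hmul : p * n ≤ x := by
          calc p * n = x / n * n := by rw [hdiv]
            _ ≤ x := Nat.div_mul_le_self x n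
        exact (Nat.le_div_iff_mul_le hp0).mpr (by nlinarith)
    · rintro ⟨hlt, hle⟩
      have hn0 : 0 < n := lt_of_le_of_lt (Nat.zero_le _) hlt
      have h1 : n * p ≤ x := (Nat.le_div_iff_mul_le hp0).mp hle
      have h2 : p ≤ x / n := (Nat.le_div_iff_mul_le hn0).mpr (by nlinarith)
      have h3 : x / n < p + 1 := by
        by_contra hge
        push_neg at hge
        have h4 : n * (p+1) ≤ x := by
          have := (Nat.le_div_iff_mul_le hn0).mp hge
          nlinarith
        have : n ≤ x / (p+1) := (Nat.le_div_iff_mul_le (Nat.succ_pos p)).mpr h4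
        omega
      have hdiv : x / n = p := by omega
      have hnx : n ≤ x := le_trans hle (Nat.div_le_self x p)
      exact ⟨⟨⟨hn0, hnx⟩, hdiv ▸ hprime⟩, hdiv⟩
  rw [hfib, Nat.card_Ioc]

-- cast div bounds
lemma cast_div_le' (x n : ℕ) : ((x/n : ℕ) : ℝ) ≤ (x:ℝ)/(n:ℝ) := Nat.cast_div_le

lemma cast_div_gt (x n : ℕ) (hn : 0 < n) : (x:ℝ)/(n:ℝ) - 1 ≤ ((x/n : ℕ) : ℝ) := by
  have h := Nat.div_add_mod x n
  have hm : x % n < n := Nat.mod_lt x hn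
  have hR : (x:ℝ) < (n:ℝ) * ((x/n : ℕ):ℝ) + n := by
    have : (x:ℝ) = (n:ℝ) * ((x/n:ℕ):ℝ) + ((x % n : ℕ):ℝ) := by exact_mod_cast h.symm
    rw [this]
    have : ((x % n : ℕ):ℝ) < (n:ℝ) := by exact_mod_cast hm
    linarith
  have hnR : (0:ℝ) < n := by exact_mod_cast hn
  rw [sub_le_iff_le_add, div_le_iff₀ hnR]
  nlinarith

theorem F_elementary_bounds :
    ∃ A₁ > (0:ℝ), ∃ A₂ > (0:ℝ), ∀ x : ℕ, 2 ≤ x →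
      P * x - A₁ * Real.sqrt x / Real.log x ≤ (F x : ℝ) ∧
      (F x : ℝ) ≤ P * x + A₂ * Real.sqrt x := by
  refine ⟨300, by norm_num, 3, by norm_num, fun x hx => ?_⟩
  classical
  set y := Nat.sqrt x with hy
  have hyx : y ≤ x := Nat.sqrt_le_self x
  have hxR : (2:ℝ) ≤ (x:ℝ) := by exact_mod_cast hx
  have hlogx : (0:ℝ) < Real.log x := Real.log_pos (by linarith)
  have hsx : (1:ℝ) ≤ Real.sqrt x := by
    rw [show (1:ℝ) = Real.sqrt 1 by simp]
    exact Real.sqrt_le_sqrt (by linarith)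
  have hsxpos : (0:ℝ) < Real.sqrt x := by linarith
  have hyle : (y:ℝ) ≤ Real.sqrt x := by
    rw [Real.le_sqrt (by positivity) (by positivity)]
    exact_mod_cast Nat.sqrt_le' x
  have hylt : Real.sqrt x < (y:ℝ) + 1 := by
    rw [show (y:ℝ)+1 = ((y+1 : ℕ):ℝ) by push_cast; ring]
    rw [Real.sqrt_lt' (by positivity)]
    exact_mod_cast Nat.lt_succ_sqrt' x
  set S := (Finset.range (x+1)).filter Nat.Prime with hS
  set d : ℕ → ℝ := fun p => ((x/p : ℕ):ℝ) - ((x/(p+1) : ℕ):ℝ) with hd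
  have hFsum : (F x : ℝ) = ∑ p ∈ S, d p := by
    rw [F_eq x, Nat.cast_sum]
    apply Finset.sum_congr rfl
    intro p hp
    rw [Finset.mem_filter] at hp
    rw [Nat.cast_sub (Nat.div_le_div_left (Nat.le_succ p) hp.2.pos)]
  have hdnonneg : ∀ p, 0 < p → 0 ≤ d p := by
    intro p hp
    rw [hd]
    simp only [sub_nonneg]
    exact_mod_cast Nat.div_le_div_left (Nat.le_succ p) hp
  have hsm : S.filter (fun p => p ≤ y) = (Finset.range (y+1)).filter Nat.Prime := by
    ext p
    simp only [hS, Finset.mem_filter, Finset.mem_range]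
    constructor
    · rintro ⟨⟨-, hp⟩, hpy⟩
      exact ⟨by omega, hp⟩
    · rintro ⟨hpy, hp⟩
      exact ⟨⟨by omega, hp⟩, by omega⟩
  set Psum := ∑ p ∈ (Finset.range (y+1)).filter Nat.Prime, 1/((p:ℝ)*((p:ℝ)+1)) with hPsum
  have hsplit : ∑ p ∈ S, d p
      = ∑ p ∈ (Finset.range (y+1)).filter Nat.Prime, d p
        + ∑ p ∈ S.filter (fun p => ¬ p ≤ y), d p := by
    rw [← hsm, Finset.sum_filter_add_sum_filter_not]
  -- per-prime bounds on small part
  have hterm : ∀ p ∈ (Finset.range (y+1)).filter Nat.Prime,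
      (x:ℝ) * (1/((p:ℝ)*((p:ℝ)+1))) - 1 ≤ d p ∧ d p ≤ (x:ℝ) * (1/((p:ℝ)*((p:ℝ)+1))) + 1 := by
    intro p hp
    rw [Finset.mem_filter] at hp
    have hp0 : 0 < p := hp.2.pos
    have hpR : (0:ℝ) < (p:ℝ) := by exact_mod_cast hp0
    have key : (x:ℝ)/(p:ℝ) - (x:ℝ)/((p:ℝ)+1) = (x:ℝ) * (1/((p:ℝ)*((p:ℝ)+1))) := by
      field_simp
      ring
    have u1 := cast_div_le' x p
    have u2 := cast_div_le' x (p+1)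
    have l1 := cast_div_gt x p hp0
    have l2 := cast_div_gt x (p+1) (by omega)
    have hc1 : ((p+1:ℕ):ℝ) = (p:ℝ)+1 := by push_cast; ring
    rw [hc1] at u2 l2
    constructor
    · rw [hd, ← key]; simp only; linarith
    · rw [hd, ← key]; simp only; linarith
  have hcard : ∑ p ∈ (Finset.range (y+1)).filter Nat.Prime, (1:ℝ) = (Cnt y : ℝ) := by
    rw [Finset.sum_const, Cnt]
    simp
  have hsmall_sum_lb : (x:ℝ) * Psum - (Cnt y : ℝ)
      ≤ ∑ p ∈ (Finset.range (y+1)).filter Nat.Prime, d p := by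
    have := Finset.sum_le_sum (fun p hp => (hterm p hp).1)
    rw [Finset.sum_sub_distrib, ← Finset.mul_sum, hcard] at this
    exact this
  have hsmall_sum_ub : ∑ p ∈ (Finset.range (y+1)).filter Nat.Prime, d p
      ≤ (x:ℝ) * Psum + (Cnt y : ℝ) := by
    have := Finset.sum_le_sum (fun p hp => (hterm p hp).2)
    rw [Finset.sum_add_distrib, ← Finset.mul_sum, hcard] at this
    exact this
  -- big part
  have hbig_nonneg : 0 ≤ ∑ p ∈ S.filter (fun p => ¬ p ≤ y), d p := by
    apply Finset.sum_nonneg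
    intro p hp
    rw [Finset.mem_filter, hS, Finset.mem_filter] at hp
    exact hdnonneg p hp.1.2.pos
  have hbig_ub : ∑ p ∈ S.filter (fun p => ¬ p ≤ y), d p ≤ Real.sqrt x := by
    have hsub : S.filter (fun p => ¬ p ≤ y) ⊆ Finset.Icc (y+1) x := by
      intro p hp
      simp only [Finset.mem_filter, hS, Finset.mem_range] at hp
      rw [Finset.mem_Icc]
      omega
    have h1 : ∑ p ∈ S.filter (fun p => ¬ p ≤ y), d p ≤ ∑ n ∈ Finset.Icc (y+1) x, d n := by
      apply Finset.sum_le_sum_of_subset_of_nonneg hsub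
      intro n hn _
      rw [Finset.mem_Icc] at hn
      exact hdnonneg n (by omega)
    have h2 : ∑ n ∈ Finset.Icc (y+1) x, d n = ((x/(y+1) : ℕ):ℝ) - ((x/(x+1) : ℕ):ℝ) :=
      tele (fun n => ((x/n : ℕ):ℝ)) (y+1) x (by omega)
    have h3 : ((x/(y+1) : ℕ):ℝ) ≤ Real.sqrt x := by
      calc ((x/(y+1) : ℕ):ℝ) ≤ (x:ℝ)/((y+1:ℕ):ℝ) := cast_div_le' x (y+1)
        _ ≤ (x:ℝ)/Real.sqrt x := by
            apply div_le_div_of_nonneg_left (by linarith) hsxpos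
            push_cast
            linarith
        _ = Real.sqrt x := Real.div_sqrt
    have h4 : (0:ℝ) ≤ ((x/(x+1) : ℕ):ℝ) := by positivity
    linarith
  -- counts
  have hCnt_le : (Cnt y : ℝ) ≤ 2 * Real.sqrt x := by
    have : Cnt y ≤ y + 1 := by
      rw [Cnt]
      calc ((Finset.range (y+1)).filter Nat.Prime).card ≤ (Finset.range (y+1)).card :=
        Finset.card_le_card (Finset.filter_subset _ _)
        _ = y + 1 := Finset.card_range _
    calc (Cnt y : ℝ) ≤ (y:ℝ) + 1 := by exact_mod_cast this
      _ ≤ Real.sqrt x + 1 := by linarith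
      _ ≤ 2 * Real.sqrt x := by linarith
  constructor
  · -- lower bound
    rcases Nat.lt_or_ge x 4 with hx4 | hx4
    · -- small x : 2 ≤ x ≤ 3, use P ≤ 25
      have hP25 : P ≤ 25 := by
        have h := tail_bound (y := 2) le_rfl
        have he : (Finset.range 3).filter Nat.Prime = {2} := by decide
        rw [he] at h
        have hlog2 : (0.6931471803:ℝ) < Real.log 2 := Real.log_two_gt_d9
        have : 32/((2:ℕ):ℝ) / Real.log 2 ≤ 24 := by
          rw [div_le_iff₀ (by linarith)]
          push_cast
          linarith
        push_cast at h ⊢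
        rw [Finset.sum_singleton] at h
        have h32 : (32:ℝ)/(2 * Real.log 2) ≤ 24 := by
          rw [div_le_iff₀ (by linarith)]
          linarith
        norm_num at h
        linarith
      have hxle : (x:ℝ) ≤ 3 := by exact_mod_cast Nat.lt_succ_iff.mp (by omega)
      have hlogle : Real.log x ≤ 2 := by
        have := Real.log_le_sub_one_of_pos (show (0:ℝ) < x by linarith)
        linarith
      have hF0 : (0:ℝ) ≤ (F x : ℝ) := by positivity
      have hdiv : 150 ≤ 300 * Real.sqrt x / Real.log x := by
        rw [le_div_iff₀ hlogx]
        nlinarith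
      nlinarith [hP25, mul_le_mul_of_nonneg_right hP25 (show (0:ℝ) ≤ x by linarith)]
    · -- main case x ≥ 4
      have hy2 : 2 ≤ y := by
        have : 2 * 2 ≤ x := by omega
        exact Nat.le_sqrt.mpr this  -- might be Nat.le_sqrt'
      have hyR : (2:ℝ) ≤ (y:ℝ) := by exact_mod_cast hy2
      have hlogy : (0:ℝ) < Real.log y := Real.log_pos (by linarith)
      have hy2x : Real.sqrt x ≤ 2 * y := by linarith
      have hlogxy : Real.log x ≤ 4 * Real.log y := by
        have h1 : Real.log x ≤ 2 * Real.log ((y:ℝ)+1) := by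
          have hxlt : (x:ℝ) ≤ ((y:ℝ)+1)^2 := by
            have := Nat.lt_succ_sqrt' x
            have : (x:ℝ) < ((y+1:ℕ):ℝ)^2 := by exact_mod_cast (by nlinarith [Nat.lt_succ_sqrt' x] : x < (y+1)^2)
            push_cast at this
            linarith
          calc Real.log x ≤ Real.log (((y:ℝ)+1)^2) :=
              Real.log_le_log (by linarith) hxlt
            _ = 2 * Real.log ((y:ℝ)+1) := by
              rw [show ((y:ℝ)+1)^2 = ((y:ℝ)+1)*((y:ℝ)+1) by ring,
                Real.log_mul (by linarith) (by linarith)]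
              ring
        have h2 : Real.log ((y:ℝ)+1) ≤ 2 * Real.log y := by
          calc Real.log ((y:ℝ)+1) ≤ Real.log ((y:ℝ)^2) :=
              Real.log_le_log (by linarith) (by nlinarith)
            _ = 2 * Real.log y := by
              rw [show ((y:ℝ))^2 = (y:ℝ)*(y:ℝ) by ring,
                Real.log_mul (by linarith) (by linarith)]
              ring
        linarith
      have htail := tail_bound hy2
      rw [← hPsum] at htail
      have hcheby := cheby hy2
      -- error bounds
      have e1 : (x:ℝ) * (32/((y:ℝ) * Real.log y)) ≤ 256 * Real.sqrt x / Real.log x := by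
        rw [mul_div_assoc', div_le_div_iff₀ (by positivity) hlogx]
        have hxs : (x:ℝ) = Real.sqrt x * Real.sqrt x := (Real.mul_self_sqrt (by linarith)).symm
        calc (x:ℝ) * 32 * Real.log x = 32 * (Real.sqrt x * (Real.sqrt x * Real.log x)) := by
              linear_combination 32 * Real.log x * hxs
          _ ≤ 32 * (Real.sqrt x * ((2*y) * (4 * Real.log y))) := by
              apply mul_le_mul_of_nonneg_left _ (by norm_num)
              apply mul_le_mul_of_nonneg_left _ hsxpos.le
              apply mul_le_mul hy2x hlogxy hlogx.le (by linarith)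
          _ = 256 * Real.sqrt x * ((y:ℝ) * Real.log y) := by ring
      have e2 : (Cnt y : ℝ) ≤ 32 * Real.sqrt x / Real.log x := by
        calc (Cnt y : ℝ) ≤ 8 * y / Real.log y := hcheby
          _ ≤ 32 * Real.sqrt x / Real.log x := by
            rw [div_le_div_iff₀ hlogy hlogx]
            calc 8 * (y:ℝ) * Real.log x ≤ 8 * (y:ℝ) * (4 * Real.log y) := by
                  apply mul_le_mul_of_nonneg_left hlogxy (by positivity)
              _ = 32 * (y:ℝ) * Real.log y := by ring
              _ ≤ 32 * Real.sqrt x * Real.log y := by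
                  apply mul_le_mul_of_nonneg_right _ hlogy.le
                  apply mul_le_mul_of_nonneg_left hyle (by norm_num)
      -- combine
      have hPx : P * x ≤ (x:ℝ) * Psum + (x:ℝ) * (32/((y:ℝ) * Real.log y)) := by
        have := mul_le_mul_of_nonneg_left htail (show (0:ℝ) ≤ x by linarith)
        nlinarith [this]
      rw [hFsum, hsplit]
      have : (x:ℝ) * Psum - (Cnt y:ℝ) ≤ ∑ p ∈ (Finset.range (y+1)).filter Nat.Prime, d p
          + ∑ p ∈ S.filter (fun p => ¬ p ≤ y), d p := by linarith
      have hfinal : P * x - 300 * Real.sqrt x / Real.log x ≤ (x:ℝ) * Psum - (Cnt y:ℝ) := by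
        have h288 : 256 * Real.sqrt x / Real.log x + 32 * Real.sqrt x / Real.log x
            ≤ 300 * Real.sqrt x / Real.log x := by
          rw [← add_div]
          gcongr
          linarith
        linarith
      linarith
  · -- upper bound
    have hPsumP : Psum ≤ P := Psum_le_P y
    have hxP : (x:ℝ) * Psum ≤ P * (x:ℝ) := by
      rw [mul_comm]
      apply mul_le_mul_of_nonneg_right hPsumP (by linarith)
    rw [hFsum, hsplit]
    have : ∑ p ∈ (Finset.range (y+1)).filter Nat.Prime, d p
        + ∑ p ∈ S.filter (fun p => ¬ p ≤ y), d p
        ≤ ((x:ℝ) * Psum + (Cnt y:ℝ)) + Real.sqrt x := by linarith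
    calc ∑ p ∈ (Finset.range (y+1)).filter Nat.Prime, d p
        + ∑ p ∈ S.filter (fun p => ¬ p ≤ y), d p
        ≤ ((x:ℝ) * Psum + (Cnt y:ℝ)) + Real.sqrt x := this
      _ ≤ P * x + 2 * Real.sqrt x + Real.sqrt x := by linarith
      _ = P * x + 3 * Real.sqrt x := by ring
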